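/- Let G be a finite graph with adjacency matrix A and degree matrix D, and suppose y ∈ ℝⁿ is a unit vector with H(λ)y = 0 for some λ ≠ 0, where H(t) = t²I - tA + (D-I). Set x = (D-I)y/λ. Then for any t ∈ ℝ, yᵀH(t)y = (t - ⟨x,y⟩)(t - λ). -/

import Mathlib

open scoped Matrix

/-- If `y` is a unit vector with `H(λ) y = 0` for `λ ≠ 0` and `x = (D-I)y/λ`, then
`yᵀ H(t) y = (t - ⟨x,y⟩)(t - λ)` for all real `t`. -/
theorem betheHessian_quadratic_form (n : ℕ) (A D : Matrix (Fin n) (Fin n) ℝ)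
    (y : Fin n → ℝ) (lam : ℝ) (hlam : lam ≠ 0)
    (hy : y ⬝ᵥ y = 1)
    (H : ℝ → Matrix (Fin n) (Fin n) ℝ)
    (hH : ∀ s : ℝ, H s = s ^ 2 • (1 : Matrix (Fin n) (Fin n) ℝ) - s • A + (D - 1))
    (hker : (H lam).mulVec y = 0)
    (x : Fin n → ℝ) (hx : x = lam⁻¹ • (D - 1).mulVec y) :
    ∀ t : ℝ, y ⬝ᵥ (H t).mulVec y = (t - x ⬝ᵥ y) * (t - lam) := by
  intro t
  have hker' : y ⬝ᵥ (H lam).mulVec y = 0 := by rw [hker, dotProduct_zero]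
  set a := y ⬝ᵥ A.mulVec y with ha
  set b := y ⬝ᵥ (D - 1).mulVec y with hb
  have expand : ∀ s : ℝ, y ⬝ᵥ (H s).mulVec y = s ^ 2 - s * a + b := by
    intro s
    rw [hH]
    simp [Matrix.add_mulVec, Matrix.sub_mulVec, Matrix.smul_mulVec,
      Matrix.one_mulVec, dotProduct_add, dotProduct_sub,
      dotProduct_smul, hy, smul_eq_mul, sq]
    rw [hb]
    simp [Matrix.sub_mulVec, dotProduct_sub, Matrix.one_mulVec, hy]
    exact Or.inl rfl
  have hk : lam ^ 2 - lam * a + b = 0 := by rw [← expand]; exact hker'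
  have hxy : x ⬝ᵥ y = lam⁻¹ * b := by
    rw [hx, smul_dotProduct, smul_eq_mul, dotProduct_comm]
  rw [expand, hxy]
  have : a = lam + lam⁻¹ * b := by field_simp; nlinarith [hk]
  rw [this]; field_simp; ring
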